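/- Let S = {v_1,…,v_n} ⊂ ℤ^n be a non-acute subset with Wu element W = Σ_{i=1}^n v_i. Then for all integers x_1,…,x_n, setting x = Σ_{i=1}^n x_i v_i, one has ⟨x, W − x⟩ ≤ 0. -/
import Mathlib


open Finset

/-- The standard dot product on `ℤ^n`. -/
def dotZ {n : ℕ} (v w : Fin n → ℤ) : ℤ := ∑ i, v i * w i

/-- A family `v_1, …, v_n` of vectors in `ℤ^n` is non-acute. -/
def NonAcute {n : ℕ} (v : Fin n → Fin n → ℤ) : Prop :=
  (∀ i, 1 ≤ dotZ (v i) (v i)) ∧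
  (∀ i j, i ≠ j → dotZ (v i) (v j) ≤ 0) ∧
  (∀ i, -(∑ j ∈ univ.erase i, dotZ (v j) (v i)) ≤ dotZ (v i) (v i))

lemma dotZ_comm {n : ℕ} (v w : Fin n → ℤ) : dotZ v w = dotZ w v := by
  simp [dotZ, mul_comm]

lemma dotZ_bilin {n : ℕ} (a b : Fin n → ℤ) (v : Fin n → Fin n → ℤ) :
    dotZ (∑ i, a i • v i) (∑ j, b j • v j)
      = ∑ i, ∑ j, a i * b j * dotZ (v i) (v j) := by
  unfold dotZ
  simp only [Finset.sum_apply, Pi.smul_apply, smul_eq_mul, Finset.sum_mul,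
    Finset.mul_sum]
  rw [Finset.sum_comm]
  conv_rhs => rw [Finset.sum_comm]
  refine Finset.sum_congr rfl fun j _ => ?_
  rw [Finset.sum_comm]
  refine Finset.sum_congr rfl fun i _ => ?_
  exact Finset.sum_congr rfl fun k _ => by ring

lemma int_mul_one_sub_nonpos (x : ℤ) : x * (1 - x) ≤ 0 := by
  rcases le_or_gt x 0 with h | h
  · exact mul_nonpos_of_nonpos_of_nonneg h (by omega)
  · exact mul_nonpos_of_nonneg_of_nonpos (by omega) (by omega)

theorem stmt_16 {n : ℕ} (v : Fin n → Fin n → ℤ) (hna : NonAcute v)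
    (x : Fin n → ℤ) :
    dotZ (∑ i, x i • v i) ((∑ i, v i) - ∑ i, x i • v i) ≤ 0 := by
  obtain ⟨h1, h2, h3⟩ := hna
  set A : Fin n → Fin n → ℤ := fun i j => dotZ (v i) (v j) with hA
  have hAsymm : ∀ i j, A i j = A j i := fun i j => dotZ_comm _ _
  -- row sums are nonnegative
  have hrow : ∀ i, 0 ≤ ∑ j, A i j := by
    intro i
    have h := h3 i
    have hsum : ∑ j, A i j = A i i + ∑ j ∈ univ.erase i, A j i := by
      rw [← Finset.add_sum_erase _ _ (mem_univ i)]
      exact congrArg _ (Finset.sum_congr rfl fun j _ => hAsymm i j)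
    have : -(∑ j ∈ univ.erase i, A j i) ≤ A i i := h
    linarith [hsum]
  -- rewrite the goal as a double sum
  have e1 : ((∑ i, v i) - ∑ i, x i • v i) = ∑ j, (1 - x j) • v j := by
    rw [← Finset.sum_sub_distrib]
    exact Finset.sum_congr rfl fun j _ => by module
  rw [e1, show (∑ i, x i • v i) = ∑ i, x i • v i from rfl, dotZ_bilin]
  set S : ℤ := ∑ i, ∑ j, x i * (1 - x j) * A i j with hS
  show S ≤ 0
  -- swapped form
  have hswap : S = ∑ i, ∑ j, x j * (1 - x i) * A i j := by
    rw [hS, Finset.sum_comm]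
    exact Finset.sum_congr rfl fun i _ => Finset.sum_congr rfl fun j _ => by
      rw [hAsymm j i]
  have key : 2 * S = (∑ i, x i * (1 - x i) * (∑ j, A i j))
      + (∑ j, x j * (1 - x j) * (∑ i, A i j))
      + (∑ i, ∑ j, (x i - x j) ^ 2 * A i j) := by
    have h2S : 2 * S = ∑ i, ∑ j,
        (x i * (1 - x i) * A i j + x j * (1 - x j) * A i j
          + (x i - x j) ^ 2 * A i j) := by
      nth_rewrite 1 [two_mul]
      nth_rewrite 2 [hswap]
      rw [hS, ← Finset.sum_add_distrib]
      refine Finset.sum_congr rfl fun i _ => ?_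
      rw [← Finset.sum_add_distrib]
      exact Finset.sum_congr rfl fun j _ => by ring
    rw [h2S]
    simp only [Finset.sum_add_distrib]
    congr 1
    · congr 1
      · exact Finset.sum_congr rfl fun i _ => by rw [Finset.mul_sum]
      · rw [Finset.sum_comm]
        exact Finset.sum_congr rfl fun j _ => by rw [Finset.mul_sum]
  have t1 : (∑ i, x i * (1 - x i) * (∑ j, A i j)) ≤ 0 :=
    Finset.sum_nonpos fun i _ =>
      mul_nonpos_of_nonpos_of_nonneg (int_mul_one_sub_nonpos _) (hrow i)
  have t2 : (∑ j, x j * (1 - x j) * (∑ i, A i j)) ≤ 0 := by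
    refine Finset.sum_nonpos fun j _ => ?_
    have : (∑ i, A i j) = ∑ i, A j i :=
      Finset.sum_congr rfl fun i _ => hAsymm i j
    rw [this]
    exact mul_nonpos_of_nonpos_of_nonneg (int_mul_one_sub_nonpos _) (hrow j)
  have t3 : (∑ i, ∑ j, (x i - x j) ^ 2 * A i j) ≤ 0 := by
    refine Finset.sum_nonpos fun i _ => Finset.sum_nonpos fun j _ => ?_
    rcases eq_or_ne i j with rfl | hij
    · simp
    · exact mul_nonpos_of_nonneg_of_nonpos (sq_nonneg _) (h2 i j hij)
  linarith
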